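/- Under the grid saddle move, which exchanges two X-markings in a 2x2 block from the top-left/bottom-right squares to the top-right/bottom-left squares (keeping all O-markings and grid lines fixed), the Alexander grading of every generator changes by at most 1/2, and the maximum shift 1/2 is realized; i.e., the identity map on generators has Alexander grading shift exactly 1/2. -/

import Mathlib

/-- The planar bilinear form `J`. -/
noncomputable def J (p q : ℝ × ℝ) : ℝ :=
  if (p.1 - q.1) * (p.2 - q.2) > 0 then 1/2 else 0

/-- The Alexander grading of the generator with points `(i, σ i)` in an index-`n` diagram
whose `X`- and `O`-markings sit at `(i + 1/2, xm i + 1/2)` and `(i + 1/2, om i + 1/2)`. -/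
noncomputable def alex (n : ℕ) (xm om σ : Equiv.Perm (Fin n)) : ℝ :=
  (∑ i : Fin n, ∑ j : Fin n, J (((i : ℕ) : ℝ), ((σ i : ℕ) : ℝ))
      (((j : ℕ) : ℝ) + 1/2, ((xm j : ℕ) : ℝ) + 1/2))
    - (∑ i : Fin n, ∑ j : Fin n, J (((i : ℕ) : ℝ), ((σ i : ℕ) : ℝ))
      (((j : ℕ) : ℝ) + 1/2, ((om j : ℕ) : ℝ) + 1/2))
    - (1/2) * (∑ i : Fin n, ∑ j : Fin n, J (((i : ℕ) : ℝ) + 1/2, ((xm i : ℕ) : ℝ) + 1/2)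
      (((j : ℕ) : ℝ) + 1/2, ((xm j : ℕ) : ℝ) + 1/2))
    + (1/2) * (∑ i : Fin n, ∑ j : Fin n, J (((i : ℕ) : ℝ) + 1/2, ((om i : ℕ) : ℝ) + 1/2)
      (((j : ℕ) : ℝ) + 1/2, ((om j : ℕ) : ℝ) + 1/2))
    - ((n : ℝ) - 1) / 2

set_option maxHeartbeats 2000000

lemma J_half {x y u v : ℝ} (h : (x - u) * (y - v) > 0) : J (x, y) (u, v) = 1/2 := if_pos h

lemma J_zero {x y u v : ℝ} (h : ¬ (x - u) * (y - v) > 0) : J (x, y) (u, v) = 0 := if_neg h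

lemma same_sign_iff {t p q : ℝ} (h : 0 < p * q) : 0 < t * p ↔ 0 < t * q := by
  constructor <;> intro h' <;> nlinarith [mul_pos h' h, sq_nonneg p, sq_nonneg q]

/-- swap the second coordinate of the first point -/
lemma J_congr₁ {X y1 y2 U V : ℝ} (h : 0 < (y1 - V) * (y2 - V)) :
    J (X, y1) (U, V) = J (X, y2) (U, V) := by
  simp only [J]
  exact if_congr (by simpa [gt_iff_lt] using same_sign_iff (t := X - U) h) rfl rfl

/-- swap the second coordinate of the second point -/
lemma J_congr₂ {X Y U v1 v2 : ℝ} (h : 0 < (Y - v1) * (Y - v2)) :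
    J (X, Y) (U, v1) = J (X, Y) (U, v2) := by
  simp only [J]
  refine if_congr ?_ rfl rfl
  constructor <;> intro h' <;> nlinarith [mul_pos h' h, sq_nonneg (Y - v1), sq_nonneg (Y - v2)]

set_option maxHeartbeats 1000000 in
lemma fval (m s A B : ℕ) :
    J ((m:ℝ), (s:ℝ)) ((A:ℝ)+1/2, (B:ℝ)+1/2)
      + J ((m:ℝ), (s:ℝ)) (((A:ℝ)+1)+1/2, ((B:ℝ)+1)+1/2)
      - J ((m:ℝ), (s:ℝ)) ((A:ℝ)+1/2, ((B:ℝ)+1)+1/2)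
      - J ((m:ℝ), (s:ℝ)) (((A:ℝ)+1)+1/2, (B:ℝ)+1/2)
    = if m = A+1 ∧ s = B+1 then 1 else 0 := by
  have cm : m ≤ A ∨ m = A+1 ∨ A+2 ≤ m := by omega
  have cs : s ≤ B ∨ s = B+1 ∨ B+2 ≤ s := by omega
  rcases cm with hm | hm | hm <;> rcases cs with hs | hs | hs
  · have hm' : (m:ℝ) ≤ A := by exact_mod_cast hm
    have hs' : (s:ℝ) ≤ B := by exact_mod_cast hs
    have c0 : ((m:ℝ) - ((A:ℝ)+1/2)) * ((s:ℝ) - ((B:ℝ)+1/2)) > 0 := mul_pos_of_neg_of_neg (by linarith) (by linarith)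
    have c1 : ((m:ℝ) - (((A:ℝ)+1)+1/2)) * ((s:ℝ) - (((B:ℝ)+1)+1/2)) > 0 := mul_pos_of_neg_of_neg (by linarith) (by linarith)
    have c2 : ((m:ℝ) - ((A:ℝ)+1/2)) * ((s:ℝ) - (((B:ℝ)+1)+1/2)) > 0 := mul_pos_of_neg_of_neg (by linarith) (by linarith)
    have c3 : ((m:ℝ) - (((A:ℝ)+1)+1/2)) * ((s:ℝ) - ((B:ℝ)+1/2)) > 0 := mul_pos_of_neg_of_neg (by linarith) (by linarith)
    rw [J_half c0, J_half c1, J_half c2, J_half c3, if_neg (by omega)]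
    ring
  · have hm' : (m:ℝ) ≤ A := by exact_mod_cast hm
    have hs' : (s:ℝ) = (B:ℝ) + 1 := by exact_mod_cast hs
    have c0 : ¬ ((m:ℝ) - ((A:ℝ)+1/2)) * ((s:ℝ) - ((B:ℝ)+1/2)) > 0 := not_lt.mpr (mul_nonpos_iff.mpr (Or.inr ⟨by linarith, by linarith⟩))
    have c1 : ((m:ℝ) - (((A:ℝ)+1)+1/2)) * ((s:ℝ) - (((B:ℝ)+1)+1/2)) > 0 := mul_pos_of_neg_of_neg (by linarith) (by linarith)
    have c2 : ((m:ℝ) - ((A:ℝ)+1/2)) * ((s:ℝ) - (((B:ℝ)+1)+1/2)) > 0 := mul_pos_of_neg_of_neg (by linarith) (by linarith)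
    have c3 : ¬ ((m:ℝ) - (((A:ℝ)+1)+1/2)) * ((s:ℝ) - ((B:ℝ)+1/2)) > 0 := not_lt.mpr (mul_nonpos_iff.mpr (Or.inr ⟨by linarith, by linarith⟩))
    rw [J_zero c0, J_half c1, J_half c2, J_zero c3, if_neg (by omega)]
    ring
  · have hm' : (m:ℝ) ≤ A := by exact_mod_cast hm
    have hs' : (B:ℝ) + 2 ≤ s := by exact_mod_cast hs
    have c0 : ¬ ((m:ℝ) - ((A:ℝ)+1/2)) * ((s:ℝ) - ((B:ℝ)+1/2)) > 0 := not_lt.mpr (mul_nonpos_iff.mpr (Or.inr ⟨by linarith, by linarith⟩))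
    have c1 : ¬ ((m:ℝ) - (((A:ℝ)+1)+1/2)) * ((s:ℝ) - (((B:ℝ)+1)+1/2)) > 0 := not_lt.mpr (mul_nonpos_iff.mpr (Or.inr ⟨by linarith, by linarith⟩))
    have c2 : ¬ ((m:ℝ) - ((A:ℝ)+1/2)) * ((s:ℝ) - (((B:ℝ)+1)+1/2)) > 0 := not_lt.mpr (mul_nonpos_iff.mpr (Or.inr ⟨by linarith, by linarith⟩))
    have c3 : ¬ ((m:ℝ) - (((A:ℝ)+1)+1/2)) * ((s:ℝ) - ((B:ℝ)+1/2)) > 0 := not_lt.mpr (mul_nonpos_iff.mpr (Or.inr ⟨by linarith, by linarith⟩))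
    rw [J_zero c0, J_zero c1, J_zero c2, J_zero c3, if_neg (by omega)]
    ring
  · have hm' : (m:ℝ) = (A:ℝ) + 1 := by exact_mod_cast hm
    have hs' : (s:ℝ) ≤ B := by exact_mod_cast hs
    have c0 : ¬ ((m:ℝ) - ((A:ℝ)+1/2)) * ((s:ℝ) - ((B:ℝ)+1/2)) > 0 := not_lt.mpr (mul_nonpos_iff.mpr (Or.inl ⟨by linarith, by linarith⟩))
    have c1 : ((m:ℝ) - (((A:ℝ)+1)+1/2)) * ((s:ℝ) - (((B:ℝ)+1)+1/2)) > 0 := mul_pos_of_neg_of_neg (by linarith) (by linarith)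
    have c2 : ¬ ((m:ℝ) - ((A:ℝ)+1/2)) * ((s:ℝ) - (((B:ℝ)+1)+1/2)) > 0 := not_lt.mpr (mul_nonpos_iff.mpr (Or.inl ⟨by linarith, by linarith⟩))
    have c3 : ((m:ℝ) - (((A:ℝ)+1)+1/2)) * ((s:ℝ) - ((B:ℝ)+1/2)) > 0 := mul_pos_of_neg_of_neg (by linarith) (by linarith)
    rw [J_zero c0, J_half c1, J_zero c2, J_half c3, if_neg (by omega)]
    ring
  · have hm' : (m:ℝ) = (A:ℝ) + 1 := by exact_mod_cast hm
    have hs' : (s:ℝ) = (B:ℝ) + 1 := by exact_mod_cast hs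
    have c0 : ((m:ℝ) - ((A:ℝ)+1/2)) * ((s:ℝ) - ((B:ℝ)+1/2)) > 0 := mul_pos (by linarith) (by linarith)
    have c1 : ((m:ℝ) - (((A:ℝ)+1)+1/2)) * ((s:ℝ) - (((B:ℝ)+1)+1/2)) > 0 := mul_pos_of_neg_of_neg (by linarith) (by linarith)
    have c2 : ¬ ((m:ℝ) - ((A:ℝ)+1/2)) * ((s:ℝ) - (((B:ℝ)+1)+1/2)) > 0 := not_lt.mpr (mul_nonpos_iff.mpr (Or.inl ⟨by linarith, by linarith⟩))
    have c3 : ¬ ((m:ℝ) - (((A:ℝ)+1)+1/2)) * ((s:ℝ) - ((B:ℝ)+1/2)) > 0 := not_lt.mpr (mul_nonpos_iff.mpr (Or.inr ⟨by linarith, by linarith⟩))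
    rw [J_half c0, J_half c1, J_zero c2, J_zero c3, if_pos ⟨hm, hs⟩]
    ring
  · have hm' : (m:ℝ) = (A:ℝ) + 1 := by exact_mod_cast hm
    have hs' : (B:ℝ) + 2 ≤ s := by exact_mod_cast hs
    have c0 : ((m:ℝ) - ((A:ℝ)+1/2)) * ((s:ℝ) - ((B:ℝ)+1/2)) > 0 := mul_pos (by linarith) (by linarith)
    have c1 : ¬ ((m:ℝ) - (((A:ℝ)+1)+1/2)) * ((s:ℝ) - (((B:ℝ)+1)+1/2)) > 0 := not_lt.mpr (mul_nonpos_iff.mpr (Or.inr ⟨by linarith, by linarith⟩))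
    have c2 : ((m:ℝ) - ((A:ℝ)+1/2)) * ((s:ℝ) - (((B:ℝ)+1)+1/2)) > 0 := mul_pos (by linarith) (by linarith)
    have c3 : ¬ ((m:ℝ) - (((A:ℝ)+1)+1/2)) * ((s:ℝ) - ((B:ℝ)+1/2)) > 0 := not_lt.mpr (mul_nonpos_iff.mpr (Or.inr ⟨by linarith, by linarith⟩))
    rw [J_half c0, J_zero c1, J_half c2, J_zero c3, if_neg (by omega)]
    ring
  · have hm' : (A:ℝ) + 2 ≤ m := by exact_mod_cast hm
    have hs' : (s:ℝ) ≤ B := by exact_mod_cast hs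
    have c0 : ¬ ((m:ℝ) - ((A:ℝ)+1/2)) * ((s:ℝ) - ((B:ℝ)+1/2)) > 0 := not_lt.mpr (mul_nonpos_iff.mpr (Or.inl ⟨by linarith, by linarith⟩))
    have c1 : ¬ ((m:ℝ) - (((A:ℝ)+1)+1/2)) * ((s:ℝ) - (((B:ℝ)+1)+1/2)) > 0 := not_lt.mpr (mul_nonpos_iff.mpr (Or.inl ⟨by linarith, by linarith⟩))
    have c2 : ¬ ((m:ℝ) - ((A:ℝ)+1/2)) * ((s:ℝ) - (((B:ℝ)+1)+1/2)) > 0 := not_lt.mpr (mul_nonpos_iff.mpr (Or.inl ⟨by linarith, by linarith⟩))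
    have c3 : ¬ ((m:ℝ) - (((A:ℝ)+1)+1/2)) * ((s:ℝ) - ((B:ℝ)+1/2)) > 0 := not_lt.mpr (mul_nonpos_iff.mpr (Or.inl ⟨by linarith, by linarith⟩))
    rw [J_zero c0, J_zero c1, J_zero c2, J_zero c3, if_neg (by omega)]
    ring
  · have hm' : (A:ℝ) + 2 ≤ m := by exact_mod_cast hm
    have hs' : (s:ℝ) = (B:ℝ) + 1 := by exact_mod_cast hs
    have c0 : ((m:ℝ) - ((A:ℝ)+1/2)) * ((s:ℝ) - ((B:ℝ)+1/2)) > 0 := mul_pos (by linarith) (by linarith)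
    have c1 : ¬ ((m:ℝ) - (((A:ℝ)+1)+1/2)) * ((s:ℝ) - (((B:ℝ)+1)+1/2)) > 0 := not_lt.mpr (mul_nonpos_iff.mpr (Or.inl ⟨by linarith, by linarith⟩))
    have c2 : ¬ ((m:ℝ) - ((A:ℝ)+1/2)) * ((s:ℝ) - (((B:ℝ)+1)+1/2)) > 0 := not_lt.mpr (mul_nonpos_iff.mpr (Or.inl ⟨by linarith, by linarith⟩))
    have c3 : ((m:ℝ) - (((A:ℝ)+1)+1/2)) * ((s:ℝ) - ((B:ℝ)+1/2)) > 0 := mul_pos (by linarith) (by linarith)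
    rw [J_half c0, J_zero c1, J_zero c2, J_half c3, if_neg (by omega)]
    ring
  · have hm' : (A:ℝ) + 2 ≤ m := by exact_mod_cast hm
    have hs' : (B:ℝ) + 2 ≤ s := by exact_mod_cast hs
    have c0 : ((m:ℝ) - ((A:ℝ)+1/2)) * ((s:ℝ) - ((B:ℝ)+1/2)) > 0 := mul_pos (by linarith) (by linarith)
    have c1 : ((m:ℝ) - (((A:ℝ)+1)+1/2)) * ((s:ℝ) - (((B:ℝ)+1)+1/2)) > 0 := mul_pos (by linarith) (by linarith)
    have c2 : ((m:ℝ) - ((A:ℝ)+1/2)) * ((s:ℝ) - (((B:ℝ)+1)+1/2)) > 0 := mul_pos (by linarith) (by linarith)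
    have c3 : ((m:ℝ) - (((A:ℝ)+1)+1/2)) * ((s:ℝ) - ((B:ℝ)+1/2)) > 0 := mul_pos (by linarith) (by linarith)
    rw [J_half c0, J_half c1, J_half c2, J_half c3, if_neg (by omega)]
    ring

lemma sum_ind {n : ℕ} (u v : Fin n) :
    (∑ i : Fin n, ∑ j : Fin n, (if i = u ∧ j = v then (1/2:ℝ) else 0)) = 1/2 := by
  have h : ∀ i : Fin n, (∑ j : Fin n, (if i = u ∧ j = v then (1/2:ℝ) else 0))
      = if i = u then 1/2 else 0 := by
    intro i
    by_cases h : i = u <;> simp [h, Finset.sum_ite_eq']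
  rw [Finset.sum_congr rfl (fun i _ => h i), Finset.sum_ite_eq']
  simp

lemma sum_ind₁ {n : ℕ} (u v : Fin n) (σ : Equiv.Perm (Fin n)) :
    (∑ i : Fin n, (if i = u ∧ σ i = v then (1:ℝ) else 0)) = if σ u = v then 1 else 0 := by
  have h : ∀ i : Fin n, (if i = u ∧ σ i = v then (1:ℝ) else 0)
      = if i = u then (if σ u = v then 1 else 0) else 0 := by
    intro i
    by_cases h : i = u
    · subst h; by_cases h2 : σ i = v <;> simp [h2]
    · simp [h]
  rw [Finset.sum_congr rfl (fun i _ => h i), Finset.sum_ite_eq']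
  simp

/-- The grid saddle move: `L₁` and `L₂` have the same `O`-markings `om`; in a `2×2` block
with columns `a, a'` (where `a' = a+1`) and rows `b, b'` (where `b' = b+1`), `L₁` has its
`X`-markings at the top-left and bottom-right squares while `L₂` has them at the bottom-left
and top-right squares, the `X`-markings agreeing elsewhere.  Then the Alexander grading of
every generator changes by at most `1/2`, and the maximal shift `1/2` is realized. -/
theorem saddle_alexander_shift (n : ℕ) (om x1 x2 : Equiv.Perm (Fin n))
    (a a' b b' : Fin n) (ha : (a' : ℕ) = (a : ℕ) + 1) (hb : (b' : ℕ) = (b : ℕ) + 1)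
    (h1a : x1 a = b') (h1a' : x1 a' = b)
    (h2a : x2 a = b) (h2a' : x2 a' = b')
    (hagree : ∀ i, i ≠ a → i ≠ a' → x2 i = x1 i) :
    (∀ σ : Equiv.Perm (Fin n), alex n x2 om σ - alex n x1 om σ ≤ 1/2) ∧
    (∃ σ : Equiv.Perm (Fin n), alex n x2 om σ - alex n x1 om σ = 1/2) := by
  have hane : a ≠ a' := by intro h; rw [h] at ha; omega
  have ha' : ((a':ℕ):ℝ) = ((a:ℕ):ℝ) + 1 := by exact_mod_cast ha
  have hb' : ((b':ℕ):ℝ) = ((b:ℕ):ℝ) + 1 := by exact_mod_cast hb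
  -- off-block values of x1 avoid rows b and b+1
  have hne1 : ∀ j : Fin n, j ≠ a → j ≠ a' → (x1 j : ℕ) ≠ (b:ℕ) ∧ (x1 j : ℕ) ≠ (b:ℕ)+1 := by
    intro j hj hj'
    constructor
    · intro h
      exact hj' (x1.injective (by rw [h1a']; exact Fin.ext h))
    · intro h
      exact hj (x1.injective (by rw [h1a]; exact Fin.ext (by rw [h, hb])))
  -- the four sign products for off-block rows
  have hp₁ : ∀ j : Fin n, j ≠ a → j ≠ a' →
      0 < ((((b:ℕ):ℝ)+1/2) - (((x1 j:ℕ):ℝ)+1/2)) * (((((b:ℕ):ℝ)+1)+1/2) - (((x1 j:ℕ):ℝ)+1/2)) := by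
    intro j hj hj'
    obtain ⟨h1, h2⟩ := hne1 j hj hj'
    have hd : (x1 j:ℕ) + 1 ≤ (b:ℕ) ∨ (b:ℕ) + 2 ≤ (x1 j:ℕ) := by omega
    rcases hd with hd | hd
    · have : ((x1 j:ℕ):ℝ) + 1 ≤ ((b:ℕ):ℝ) := by exact_mod_cast hd
      exact mul_pos (by linarith) (by linarith)
    · have : ((b:ℕ):ℝ) + 2 ≤ ((x1 j:ℕ):ℝ) := by exact_mod_cast hd
      exact mul_pos_of_neg_of_neg (by linarith) (by linarith)
  have hp₁' : ∀ j : Fin n, j ≠ a → j ≠ a' →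
      0 < (((((b:ℕ):ℝ)+1)+1/2) - (((x1 j:ℕ):ℝ)+1/2)) * ((((b:ℕ):ℝ)+1/2) - (((x1 j:ℕ):ℝ)+1/2)) := by
    intro j hj hj'; rw [mul_comm]; exact hp₁ j hj hj'
  have hp₂ : ∀ j : Fin n, j ≠ a → j ≠ a' →
      0 < ((((x1 j:ℕ):ℝ)+1/2) - (((b:ℕ):ℝ)+1/2)) * ((((x1 j:ℕ):ℝ)+1/2) - ((((b:ℕ):ℝ)+1)+1/2)) := by
    intro j hj hj'
    obtain ⟨h1, h2⟩ := hne1 j hj hj'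
    have hd : (x1 j:ℕ) + 1 ≤ (b:ℕ) ∨ (b:ℕ) + 2 ≤ (x1 j:ℕ) := by omega
    rcases hd with hd | hd
    · have : ((x1 j:ℕ):ℝ) + 1 ≤ ((b:ℕ):ℝ) := by exact_mod_cast hd
      exact mul_pos_of_neg_of_neg (by linarith) (by linarith)
    · have : ((b:ℕ):ℝ) + 2 ≤ ((x1 j:ℕ):ℝ) := by exact_mod_cast hd
      exact mul_pos (by linarith) (by linarith)
  have hp₂' : ∀ j : Fin n, j ≠ a → j ≠ a' →
      0 < ((((x1 j:ℕ):ℝ)+1/2) - ((((b:ℕ):ℝ)+1)+1/2)) * ((((x1 j:ℕ):ℝ)+1/2) - (((b:ℕ):ℝ)+1/2)) := by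
    intro j hj hj'; rw [mul_comm]; exact hp₂ j hj hj'
  -- key formula
  have key : ∀ σ : Equiv.Perm (Fin n),
      alex n x2 om σ - alex n x1 om σ = (if σ a' = b' then (1:ℝ) else 0) - 1/2 := by
    intro σ
    -- Part A : generator against X difference
    have hA : (∑ i : Fin n, ∑ j : Fin n, J (((i : ℕ) : ℝ), ((σ i : ℕ) : ℝ))
          (((j : ℕ) : ℝ) + 1/2, ((x2 j : ℕ) : ℝ) + 1/2))
        - (∑ i : Fin n, ∑ j : Fin n, J (((i : ℕ) : ℝ), ((σ i : ℕ) : ℝ))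
          (((j : ℕ) : ℝ) + 1/2, ((x1 j : ℕ) : ℝ) + 1/2))
        = (if σ a' = b' then (1:ℝ) else 0) := by
      rw [← Finset.sum_sub_distrib]
      have inner : ∀ i : Fin n,
          ((∑ j : Fin n, J (((i : ℕ) : ℝ), ((σ i : ℕ) : ℝ))
              (((j : ℕ) : ℝ) + 1/2, ((x2 j : ℕ) : ℝ) + 1/2))
            - ∑ j : Fin n, J (((i : ℕ) : ℝ), ((σ i : ℕ) : ℝ))
              (((j : ℕ) : ℝ) + 1/2, ((x1 j : ℕ) : ℝ) + 1/2))
          = if i = a' ∧ σ i = b' then 1 else 0 := by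
        intro i
        rw [← Finset.sum_sub_distrib]
        have step : ∀ j : Fin n,
            J (((i:ℕ):ℝ), ((σ i:ℕ):ℝ)) (((j:ℕ):ℝ)+1/2, ((x2 j:ℕ):ℝ)+1/2)
            - J (((i:ℕ):ℝ), ((σ i:ℕ):ℝ)) (((j:ℕ):ℝ)+1/2, ((x1 j:ℕ):ℝ)+1/2)
            = (if j = a then
                 (J (((i:ℕ):ℝ), ((σ i:ℕ):ℝ)) (((a:ℕ):ℝ)+1/2, ((b:ℕ):ℝ)+1/2)
                  - J (((i:ℕ):ℝ), ((σ i:ℕ):ℝ)) (((a:ℕ):ℝ)+1/2, (((b:ℕ):ℝ)+1)+1/2)) else 0)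
              + (if j = a' then
                 (J (((i:ℕ):ℝ), ((σ i:ℕ):ℝ)) ((((a:ℕ):ℝ)+1)+1/2, (((b:ℕ):ℝ)+1)+1/2)
                  - J (((i:ℕ):ℝ), ((σ i:ℕ):ℝ)) ((((a:ℕ):ℝ)+1)+1/2, ((b:ℕ):ℝ)+1/2)) else 0) := by
          intro j
          by_cases hja : j = a
          · rw [hja]
            rw [if_pos rfl, if_neg hane, h2a, h1a, hb']
            ring
          · by_cases hja' : j = a'
            · rw [hja']
              rw [if_neg (Ne.symm hane), if_pos rfl, h2a', h1a', ha', hb']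
              ring
            · rw [hagree j hja hja', if_neg hja, if_neg hja']
              ring
        rw [Finset.sum_congr rfl (fun j _ => step j), Finset.sum_add_distrib,
          Finset.sum_ite_eq' Finset.univ a, Finset.sum_ite_eq' Finset.univ a',
          if_pos (Finset.mem_univ a), if_pos (Finset.mem_univ a')]
        have hf := fval (i:ℕ) ((σ i:ℕ)) (a:ℕ) (b:ℕ)
        have hcond : ((i:ℕ) = (a:ℕ)+1 ∧ (σ i:ℕ) = (b:ℕ)+1) ↔ (i = a' ∧ σ i = b') := by
          rw [← ha, ← hb, Fin.val_inj, Fin.val_inj]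
        rw [if_congr hcond rfl rfl] at hf
        linarith [hf]
      rw [Finset.sum_congr rfl (fun i _ => inner i), sum_ind₁ a' b' σ]
    -- Part B : X self-pairing difference
    have step2 : ∀ i j : Fin n,
        J (((i:ℕ):ℝ)+1/2, ((x2 i:ℕ):ℝ)+1/2) (((j:ℕ):ℝ)+1/2, ((x2 j:ℕ):ℝ)+1/2)
        - J (((i:ℕ):ℝ)+1/2, ((x1 i:ℕ):ℝ)+1/2) (((j:ℕ):ℝ)+1/2, ((x1 j:ℕ):ℝ)+1/2)
        = (if i = a ∧ j = a' then (1/2:ℝ) else 0) + (if i = a' ∧ j = a then (1/2:ℝ) else 0) := by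
      intro i j
      by_cases hia : i = a
      · rw [hia]
        by_cases hja : j = a
        · rw [hja]
          rw [h2a, h1a, hb']
          have z1 : ¬ ((((a:ℕ):ℝ)+1/2) - (((a:ℕ):ℝ)+1/2)) * ((((b:ℕ):ℝ)+1/2) - (((b:ℕ):ℝ)+1/2)) > 0 := by nlinarith
          have z2 : ¬ ((((a:ℕ):ℝ)+1/2) - (((a:ℕ):ℝ)+1/2)) * (((((b:ℕ):ℝ)+1)+1/2) - ((((b:ℕ):ℝ)+1)+1/2)) > 0 := by nlinarith
          rw [J_zero z1, J_zero z2]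
          simp [hane, Ne.symm hane]
        · by_cases hja' : j = a'
          · rw [hja']
            rw [h2a, h2a', h1a, h1a', ha', hb']
            have p1 : ((((a:ℕ):ℝ)+1/2) - ((((a:ℕ):ℝ)+1)+1/2)) * ((((b:ℕ):ℝ)+1/2) - ((((b:ℕ):ℝ)+1)+1/2)) > 0 := by nlinarith
            have p2 : ¬ ((((a:ℕ):ℝ)+1/2) - ((((a:ℕ):ℝ)+1)+1/2)) * (((((b:ℕ):ℝ)+1)+1/2) - (((b:ℕ):ℝ)+1/2)) > 0 := by nlinarith
            rw [J_half p1, J_zero p2]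
            simp [hane, Ne.symm hane]
          · rw [h2a, h1a, hb', hagree j hja hja']
            rw [J_congr₁ (hp₁ j hja hja')]
            simp [hja, hja', hane, Ne.symm hane]
      · by_cases hia' : i = a'
        · rw [hia']
          by_cases hja : j = a
          · rw [hja]
            rw [h2a', h2a, h1a', h1a, ha', hb']
            have p3 : (((((a:ℕ):ℝ)+1)+1/2) - (((a:ℕ):ℝ)+1/2)) * (((((b:ℕ):ℝ)+1)+1/2) - (((b:ℕ):ℝ)+1/2)) > 0 := by nlinarith
            have p4 : ¬ (((((a:ℕ):ℝ)+1)+1/2) - (((a:ℕ):ℝ)+1/2)) * ((((b:ℕ):ℝ)+1/2) - ((((b:ℕ):ℝ)+1)+1/2)) > 0 := by nlinarith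
            rw [J_half p3, J_zero p4]
            simp [hane, Ne.symm hane]
          · by_cases hja' : j = a'
            · rw [hja']
              rw [h2a', h1a', ha', hb']
              have z3 : ¬ ((((((a:ℕ):ℝ)+1)+1/2)) - ((((a:ℕ):ℝ)+1)+1/2)) * ((((((b:ℕ):ℝ)+1)+1/2)) - ((((b:ℕ):ℝ)+1)+1/2)) > 0 := by nlinarith
              have z4 : ¬ ((((((a:ℕ):ℝ)+1)+1/2)) - ((((a:ℕ):ℝ)+1)+1/2)) * (((((b:ℕ):ℝ)+1/2)) - (((b:ℕ):ℝ)+1/2)) > 0 := by nlinarith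
              rw [J_zero z3, J_zero z4]
              simp [hane, Ne.symm hane]
            · rw [h2a', h1a', ha', hb', hagree j hja hja']
              rw [J_congr₁ (hp₁' j hja hja')]
              simp [hja, hja', hane, Ne.symm hane]
        · by_cases hja : j = a
          · rw [hja]
            rw [h2a, h1a, hb', hagree i hia hia']
            rw [J_congr₂ (hp₂ i hia hia')]
            simp [hia, hia', hane, Ne.symm hane]
          · by_cases hja' : j = a'
            · rw [hja']
              rw [h2a', h1a', ha', hb', hagree i hia hia']
              rw [J_congr₂ (hp₂' i hia hia')]
              simp [hia, hia', hane, Ne.symm hane]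
            · rw [hagree i hia hia', hagree j hja hja']
              simp [hia, hia', hja, hja']
    have hB : (∑ i : Fin n, ∑ j : Fin n, J (((i:ℕ):ℝ)+1/2, ((x2 i:ℕ):ℝ)+1/2)
          (((j:ℕ):ℝ)+1/2, ((x2 j:ℕ):ℝ)+1/2))
        - (∑ i : Fin n, ∑ j : Fin n, J (((i:ℕ):ℝ)+1/2, ((x1 i:ℕ):ℝ)+1/2)
          (((j:ℕ):ℝ)+1/2, ((x1 j:ℕ):ℝ)+1/2)) = 1 := by
      rw [← Finset.sum_sub_distrib,
        Finset.sum_congr rfl (fun i _ => (Finset.sum_sub_distrib _ _).symm),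
        Finset.sum_congr rfl (fun i _ => Finset.sum_congr rfl (fun j _ => step2 i j)),
        Finset.sum_congr rfl (fun i _ => Finset.sum_add_distrib),
        Finset.sum_add_distrib, sum_ind a a', sum_ind a' a]
      norm_num
    simp only [alex]
    linarith [hA, hB]
  constructor
  · intro σ
    rw [key σ]
    split_ifs <;> norm_num
  · exact ⟨x2, by rw [key x2, if_pos h2a']; norm_num⟩
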